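/- Let K ⊆ ℤ^n be a subgroup and T ⊆ ℤ_{≥0}^n a set satisfying property (i) (if a, b ∈ ℤ_{≥0}^n with a − b ∈ ℤ_{≥0}^n and a ∈ T, then b ∈ T) and property (ii) (for T_q := {a ∈ T | a mod K = q}: for all g ∈ ℤ_{≥0}^n and q ∈ ℤ^n/K, either (g + T_q) ∩ T = ∅ or g + T_q ⊆ T). Then for every ℓ ⊆ {1,…,n} and every q ∈ ℤ^n/K: if T(ℓ)_q ≠ ∅ then T(ℓ)_q = T_q. In particular, T(ℓ) is a union of whole fibers T_q. -/
import Mathlib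


open MvPolynomial

def vsupp {n : ℕ} (a : Fin n → ℕ) : Set (Fin n) := {i | a i ≠ 0}

def vcell {n : ℕ} (l : Set (Fin n)) : Set (Fin n → ℕ) := {a | vsupp a ⊆ l}

def vslice {n : ℕ} (r : Fin n → ℕ) (l : Set (Fin n)) : Set (Fin n → ℕ) :=
  (fun a => r + a) '' vcell l

def IsStdPair {n : ℕ} (T : Set (Fin n → ℕ)) (r : Fin n → ℕ) (l : Set (Fin n)) : Prop :=
  Disjoint (vsupp r) l ∧ vslice r l ⊆ T ∧
    ∀ (r' : Fin n → ℕ) (l' : Set (Fin n)), Disjoint (vsupp r') l' → vslice r' l' ⊆ T →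
      vslice r l ⊆ vslice r' l' → vslice r l = vslice r' l'

def DownClosed {n : ℕ} (T : Set (Fin n → ℕ)) : Prop :=
  ∀ a b : Fin n → ℕ, (∀ i, b i ≤ a i) → a ∈ T → b ∈ T

def vtoZ {n : ℕ} (a : Fin n → ℕ) : Fin n → ℤ := fun i => (a i : ℤ)

def fiber {n : ℕ} (K : AddSubgroup (Fin n → ℤ)) (S : Set (Fin n → ℕ))
    (q : (Fin n → ℤ) ⧸ K) : Set (Fin n → ℕ) :=
  {a ∈ S | (QuotientAddGroup.mk (vtoZ a) : (Fin n → ℤ) ⧸ K) = q}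

def PropII {n : ℕ} (K : AddSubgroup (Fin n → ℤ)) (T : Set (Fin n → ℕ)) : Prop :=
  ∀ (g : Fin n → ℕ) (q : (Fin n → ℤ) ⧸ K),
    ((fun a => g + a) '' fiber K T q) ∩ T = ∅ ∨ ((fun a => g + a) '' fiber K T q) ⊆ T

noncomputable def xmono {n : ℕ} (a : Fin n → ℕ) : MvPolynomial (Fin n) ℂ :=
  monomial (Finsupp.equivFunOnFinite.symm a) 1

def TofI {n : ℕ} (I : Ideal (MvPolynomial (Fin n) ℂ)) : Set (Fin n → ℕ) :=
  {a | xmono a ∉ I}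

def IsBinomialIdeal {n : ℕ} (I : Ideal (MvPolynomial (Fin n) ℂ)) : Prop :=
  ∃ S : Set (MvPolynomial (Fin n) ℂ), I = Ideal.span S ∧
    ∀ f ∈ S, ∃ (a b : Fin n → ℕ) (la lb : ℂ), f = la • xmono a - lb • xmono b

def KofI {n : ℕ} (I : Ideal (MvPolynomial (Fin n) ℂ)) : AddSubgroup (Fin n → ℤ) :=
  AddSubgroup.closure {v | ∃ a ∈ TofI I, ∃ b ∈ TofI I,
    (∃ la lb : ℂ, la ≠ 0 ∧ lb ≠ 0 ∧ la • xmono a - lb • xmono b ∈ I) ∧ v = vtoZ a - vtoZ b}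

def IsSaturated {n : ℕ} (I : Ideal (MvPolynomial (Fin n) ℂ)) : Prop :=
  IsBinomialIdeal I ∧ ∀ a ∈ TofI I, ∀ b ∈ TofI I, vtoZ a - vtoZ b ∈ KofI I →
    ∃ la lb : ℂ, la ≠ 0 ∧ lb ≠ 0 ∧ la • xmono a - lb • xmono b ∈ I

def Tl {n : ℕ} (T : Set (Fin n → ℕ)) (l : Set (Fin n)) : Set (Fin n → ℕ) :=
  {a | ∃ r, IsStdPair T r l ∧ a ∈ vslice r l}

def Tlbar {n : ℕ} (T : Set (Fin n → ℕ)) (l : Set (Fin n)) : Set (Fin n → ℕ) :=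
  {a | ∃ r r', (∀ i, r i ≤ r' i) ∧ IsStdPair T r' l ∧ a ∈ vslice r l}

def IsMonomialIdeal {n : ℕ} (I : Ideal (MvPolynomial (Fin n) ℂ)) : Prop :=
  ∃ S : Set (Fin n → ℕ), I = Ideal.span (xmono '' S)

def wdeg {n d : ℕ} (M : Matrix (Fin d) (Fin n) ℤ) (m : Fin n →₀ ℕ) : Fin d → ℤ :=
  M.mulVec fun i => (m i : ℤ)

noncomputable def homogComp {n d : ℕ} (M : Matrix (Fin d) (Fin n) ℤ) (q : Fin d → ℤ)
    (f : MvPolynomial (Fin n) ℂ) : MvPolynomial (Fin n) ℂ :=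
  ∑ m ∈ f.support, if wdeg M m = q then monomial m (f.coeff m) else 0

noncomputable def degPart {n d : ℕ} (M : Matrix (Fin d) (Fin n) ℤ)
    (I : Ideal (MvPolynomial (Fin n) ℂ)) (q : Fin d → ℤ) :
    Submodule ℂ (MvPolynomial (Fin n) ℂ ⧸ I) :=
  Submodule.span ℂ ((Ideal.Quotient.mk I) '' {f | ∀ m ∈ f.support, wdeg M m = q})

def IsAGraded {n d : ℕ} (M : Matrix (Fin d) (Fin n) ℤ)
    (I : Ideal (MvPolynomial (Fin n) ℂ)) : Prop :=
  (∀ f ∈ I, ∀ q : Fin d → ℤ, homogComp M q f ∈ I) ∧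
  ∀ q : Fin d → ℤ,
    (q ∈ Set.range (fun a : Fin n → ℕ => M.mulVec (vtoZ a)) →
      Module.finrank ℂ (degPart M I q) = 1) ∧
    (q ∉ Set.range (fun a : Fin n → ℕ => M.mulVec (vtoZ a)) →
      Module.finrank ℂ (degPart M I q) = 0)

noncomputable def htI {R : Type*} [CommRing R] (P : Ideal R) : ℕ∞ :=
  ⨆ (h : P.IsPrime), Order.height (⟨P, h⟩ : PrimeSpectrum R)


open Classical in
noncomputable def vproj {n : ℕ} (l : Set (Fin n)) (a : Fin n → ℕ) : Fin n → ℕ :=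
  fun i => if i ∈ l then 0 else a i

lemma mem_vslice {n : ℕ} {r a : Fin n → ℕ} {l : Set (Fin n)} :
    a ∈ vslice r l ↔ (∀ i, r i ≤ a i) ∧ ∀ i ∉ l, a i = r i := by
  constructor
  · rintro ⟨c, hc, rfl⟩
    refine ⟨fun i => Nat.le_add_right _ _, fun i hi => ?_⟩
    have : c i = 0 := by
      by_contra h; exact hi (hc h)
    simp [this]
  · rintro ⟨h1, h2⟩
    refine ⟨fun i => a i - r i, fun i hi => ?_, ?_⟩
    · by_contra hl
      have h3 := h2 i hl
      simp only [vsupp, Set.mem_setOf_eq, ne_eq] at hi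
      omega
    · funext i
      have := h1 i
      simp only [Pi.add_apply]
      omega

lemma vproj_le {n : ℕ} (l : Set (Fin n)) (a : Fin n → ℕ) (i : Fin n) : vproj l a i ≤ a i := by
  unfold vproj; split <;> omega

lemma vproj_of_notMem {n : ℕ} {l : Set (Fin n)} (a : Fin n → ℕ) {i : Fin n} (h : i ∉ l) :
    vproj l a i = a i := by
  simp [vproj, h]

lemma vproj_of_mem {n : ℕ} {l : Set (Fin n)} (a : Fin n → ℕ) {i : Fin n} (h : i ∈ l) :
    vproj l a i = 0 := by
  simp [vproj, h]

lemma self_mem_vproj {n : ℕ} (l : Set (Fin n)) (a : Fin n → ℕ) : a ∈ vslice (vproj l a) l :=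
  mem_vslice.mpr ⟨vproj_le l a, fun i hi => (vproj_of_notMem a hi).symm⟩

lemma disjoint_vproj {n : ℕ} (l : Set (Fin n)) (a : Fin n → ℕ) :
    Disjoint (vsupp (vproj l a)) l := by
  rw [Set.disjoint_left]
  intro i hi hil
  exact hi (vproj_of_mem a hil)

lemma slice_sub_data {n : ℕ} {r r' : Fin n → ℕ} {l l' : Set (Fin n)}
    (h : vslice r l ⊆ vslice r' l') :
    (∀ i, r' i ≤ r i) ∧ (∀ i ∉ l', r i = r' i) ∧ l ⊆ l' := by
  have hr : r ∈ vslice r' l' := h (mem_vslice.mpr ⟨fun i => le_refl _, fun i _ => rfl⟩)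
  obtain ⟨hle, heq⟩ := mem_vslice.mp hr
  refine ⟨hle, heq, fun i hi => ?_⟩
  by_contra hi'
  have hz : r + Pi.single i (r' i + 1) ∈ vslice r l := by
    refine mem_vslice.mpr ⟨fun j => Nat.le_add_right _ _, fun j hj => ?_⟩
    have hji : j ≠ i := fun h => hj (h ▸ hi)
    simp [Pi.single_apply, hji]
  have := (mem_vslice.mp (h hz)).2 i hi'
  have h1 := heq i hi'
  simp [Pi.single_apply] at this
  omega

lemma mk_vtoZ_mem_fiber {n : ℕ} {K : AddSubgroup (Fin n → ℤ)} {T : Set (Fin n → ℕ)}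
    {x : Fin n → ℕ} (hx : x ∈ T) : x ∈ fiber K T (QuotientAddGroup.mk (vtoZ x)) := ⟨hx, rfl⟩

lemma slice_transfer {n : ℕ} {K : AddSubgroup (Fin n → ℤ)} {T : Set (Fin n → ℕ)}
    (h1 : DownClosed T) (h2 : PropII K T) (m : Set (Fin n)) {x y : Fin n → ℕ}
    (hx : x ∈ T) (hy : y ∈ T)
    (hq : (QuotientAddGroup.mk (vtoZ x) : (Fin n → ℤ) ⧸ K) = QuotientAddGroup.mk (vtoZ y))
    (hs : vslice (vproj m x) m ⊆ T) : vslice (vproj m y) m ⊆ T := by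
  classical
  intro z hz
  obtain ⟨hzle, hzeq⟩ := mem_vslice.mp hz
  set c : Fin n → ℕ := fun i => if i ∈ m then z i else 0 with hc
  set q : (Fin n → ℤ) ⧸ K := QuotientAddGroup.mk (vtoZ x) with hqd
  have hxc : c + x ∈ T := by
    apply hs
    refine mem_vslice.mpr ⟨fun i => ?_, fun i hi => ?_⟩
    · have := vproj_le m x i; simp only [Pi.add_apply]; omega
    · simp only [Pi.add_apply, hc, if_neg hi, vproj_of_notMem x hi, zero_add]
  have hsub : ((fun a => c + a) '' fiber K T q) ⊆ T := by
    rcases h2 c q with hemp | hsub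
    · exfalso
      rw [Set.eq_empty_iff_forall_notMem] at hemp
      exact hemp (c + x) ⟨⟨x, ⟨hx, rfl⟩, rfl⟩, hxc⟩
    · exact hsub
  have hyc : c + y ∈ T := hsub ⟨y, ⟨hy, hq.symm⟩, rfl⟩
  refine h1 (c + y) z (fun i => ?_) hyc
  by_cases him : i ∈ m
  · simp only [Pi.add_apply, hc, if_pos him]; omega
  · have := hzeq i him
    have := vproj_of_notMem y him
    simp only [Pi.add_apply, hc, if_neg him]
    omega

lemma vproj_slice_mono {n : ℕ} {l l' : Set (Fin n)} (h : l ⊆ l') (a : Fin n → ℕ) :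
    vslice (vproj l a) l ⊆ vslice (vproj l' a) l' := by
  intro z hz
  obtain ⟨hle, heq⟩ := mem_vslice.mp hz
  refine mem_vslice.mpr ⟨fun i => ?_, fun i hi => ?_⟩
  · by_cases hi : i ∈ l'
    · simp [vproj_of_mem a hi]
    · have hil : i ∉ l := fun h' => hi (h h')
      rw [vproj_of_notMem a hi, ← vproj_of_notMem a hil]
      exact hle i
  · have hil : i ∉ l := fun h' => hi (h h')
    rw [heq i hil, vproj_of_notMem a hil, vproj_of_notMem a hi]

lemma mem_Tl_key {n : ℕ} (K : AddSubgroup (Fin n → ℤ)) {T : Set (Fin n → ℕ)}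
    (h1 : DownClosed T) (h2 : PropII K T) {l : Set (Fin n)} {a b : Fin n → ℕ}
    (ha : a ∈ Tl T l) (hb : b ∈ T)
    (hq : (QuotientAddGroup.mk (vtoZ a) : (Fin n → ℤ) ⧸ K) = QuotientAddGroup.mk (vtoZ b)) :
    b ∈ Tl T l := by
  obtain ⟨r, hstd, hmem⟩ := ha
  have hr : r = vproj l a := by
    funext i
    by_cases hi : i ∈ l
    · rw [vproj_of_mem a hi]
      by_contra h
      exact (Set.disjoint_left.mp hstd.1 h) hi
    · rw [vproj_of_notMem a hi, (mem_vslice.mp hmem).2 i hi]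
  subst hr
  have haT : a ∈ T := hstd.2.1 hmem
  have hTb : vslice (vproj l b) l ⊆ T := slice_transfer h1 h2 l haT hb hq hstd.2.1
  refine ⟨vproj l b, ⟨disjoint_vproj l b, hTb, ?_⟩, self_mem_vproj l b⟩
  intro r' l' hd' hsub' hss'
  obtain ⟨hle', heq', hll'⟩ := slice_sub_data hss'
  have hr' : r' = vproj l' b := by
    funext i
    by_cases hi : i ∈ l'
    · rw [vproj_of_mem b hi]
      by_contra h
      exact (Set.disjoint_left.mp hd' h) hi
    · have hil : i ∉ l := fun h' => hi (hll' h')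
      rw [vproj_of_notMem b hi, ← heq' i hi, vproj_of_notMem b hil]
  subst hr'
  have hTa' : vslice (vproj l' a) l' ⊆ T := slice_transfer h1 h2 l' hb haT hq.symm hsub'
  have heq := hstd.2.2 (vproj l' a) l' (disjoint_vproj l' a) hTa' (vproj_slice_mono hll' a)
  have hl'l : l' ⊆ l := (slice_sub_data heq.ge).2.2
  have hleq : l = l' := Set.Subset.antisymm hll' hl'l
  subst hleq
  rfl

lemma Tl_subset {n : ℕ} (T : Set (Fin n → ℕ)) (l : Set (Fin n)) : Tl T l ⊆ T := by
  rintro a ⟨r, hstd, hmem⟩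
  exact hstd.2.1 hmem

/-- Under properties (i) and (ii), if T(ℓ)_q ≠ ∅ then T(ℓ)_q = T_q;
in particular T(ℓ) is a union of whole fibers. -/
theorem stmt_3 {n : ℕ} (K : AddSubgroup (Fin n → ℤ)) (T : Set (Fin n → ℕ))
    (h1 : DownClosed T) (h2 : PropII K T) (l : Set (Fin n)) :
    (∀ q : (Fin n → ℤ) ⧸ K, (fiber K (Tl T l) q).Nonempty →
        fiber K (Tl T l) q = fiber K T q) ∧
      Tl T l = ⋃ q ∈ {q : (Fin n → ℤ) ⧸ K | (fiber K (Tl T l) q).Nonempty},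
        fiber K T q := by
  have part1 : ∀ q : (Fin n → ℤ) ⧸ K, (fiber K (Tl T l) q).Nonempty →
      fiber K (Tl T l) q = fiber K T q := by
    rintro q ⟨a, haTl, haq⟩
    ext b
    constructor
    · rintro ⟨hbTl, hbq⟩
      exact ⟨Tl_subset T l hbTl, hbq⟩
    · rintro ⟨hbT, hbq⟩
      exact ⟨mem_Tl_key K h1 h2 haTl hbT (haq.trans hbq.symm), hbq⟩
  refine ⟨part1, ?_⟩
  ext x
  simp only [Set.mem_iUnion, Set.mem_setOf_eq, exists_prop]
  constructor
  · intro hx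
    exact ⟨QuotientAddGroup.mk (vtoZ x), ⟨x, hx, rfl⟩, Tl_subset T l hx, rfl⟩
  · rintro ⟨q, hne, hxq⟩
    rw [← part1 q hne] at hxq
    exact hxq.1
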